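/- For positive integers h_1 and n, an incomplete latin square ILS(n; h_1²) (a latin square of order n with two pairwise disjoint subsquares each of order h_1) exists if and only if n ≥ 3·h_1. -/

import Mathlib

/-- A latin square of order `n`: each row and each column is a bijection. -/
def IsLatinSquare {n : ℕ} (L : Fin n → Fin n → Fin n) : Prop :=
  (∀ i, Function.Bijective (L i)) ∧ (∀ j, Function.Bijective (fun i => L i j))

/-- `ILS n k h` : a latin square of order `n` with `k` pairwise disjoint subsquares
of orders `h 0, …, h (k-1)`. -/
def ILS (n k : ℕ) (h : Fin k → ℕ) : Prop :=
  ∃ L : Fin n → Fin n → Fin n, IsLatinSquare L ∧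
    ∃ R C S : Fin k → Finset (Fin n),
      (∀ a, (R a).card = h a ∧ (C a).card = h a ∧ (S a).card = h a) ∧
      (∀ a, ∀ i ∈ R a, ∀ j ∈ C a, L i j ∈ S a) ∧
      (∀ a b, a ≠ b →
        Disjoint (R a) (R b) ∧ Disjoint (C a) (C b) ∧ Disjoint (S a) (S b))

namespace ILSAux

/-- reduction mod `M` for arguments `< 4*M`, written with `if` so `omega` can handle it. -/
def red (M x : ℕ) : ℕ :=
  if x < M then x else if x < 2*M then x - M else if x < 3*M then x - 2*M else x - 3*M

/-- the explicit `2h × (2h+m)` latin rectangle. -/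
def nr (h m i j : ℕ) : ℕ :=
  if i < h then
    if j < h then red h (i+j)
    else if j < 2*h then 2*h + red h (i + j - h)
    else if red m (i + j - 2*h) < h then h + red m (i + j - 2*h)
         else 2*h + red m (i + j - 2*h)
  else
    if j < h then h + m + red h (i - h + j)
    else if j < 2*h then h + red h (i - h + (j - h))
    else if red m (i - h + (j - 2*h) + 2*h) < h then red m (i - h + (j - 2*h) + 2*h)
         else 2*h + (red m (i - h + (j - 2*h) + 2*h) - h)

lemma red_spec (M x : ℕ) (hM : 0 < M) (hx : x < 4*M) :
    red M x < M ∧ (x = red M x ∨ x = red M x + M ∨ x = red M x + 2*M ∨ x = red M x + 3*M) := by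
  unfold red; split_ifs <;> omega

lemma nr_spec {h m : ℕ} (hh : 0 < h) (hm : h ≤ m) {i j : ℕ}
    (hi : i < 2*h) (hj : j < 2*h + m) :
    (i < h ∧ j < h ∧ nr h m i j = red h (i+j) ∧ red h (i+j) < h ∧
        (i+j = red h (i+j) ∨ i+j = red h (i+j) + h)) ∨
    (i < h ∧ h ≤ j ∧ j < 2*h ∧ nr h m i j = 2*h + red h (i+j-h) ∧ red h (i+j-h) < h ∧
        (i+j-h = red h (i+j-h) ∨ i+j-h = red h (i+j-h) + h)) ∨
    (i < h ∧ 2*h ≤ j ∧ red m (i+j-2*h) < m ∧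
        (i+j-2*h = red m (i+j-2*h) ∨ i+j-2*h = red m (i+j-2*h) + m) ∧
        ((red m (i+j-2*h) < h ∧ nr h m i j = h + red m (i+j-2*h)) ∨
         (h ≤ red m (i+j-2*h) ∧ nr h m i j = 2*h + red m (i+j-2*h)))) ∨
    (h ≤ i ∧ j < h ∧ nr h m i j = h + m + red h (i-h+j) ∧ red h (i-h+j) < h ∧
        (i-h+j = red h (i-h+j) ∨ i-h+j = red h (i-h+j) + h)) ∨
    (h ≤ i ∧ h ≤ j ∧ j < 2*h ∧ nr h m i j = h + red h (i-h+(j-h)) ∧ red h (i-h+(j-h)) < h ∧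
        (i-h+(j-h) = red h (i-h+(j-h)) ∨ i-h+(j-h) = red h (i-h+(j-h)) + h)) ∨
    (h ≤ i ∧ 2*h ≤ j ∧ red m (i-h+(j-2*h)+2*h) < m ∧
        (i-h+(j-2*h)+2*h = red m (i-h+(j-2*h)+2*h) ∨
         i-h+(j-2*h)+2*h = red m (i-h+(j-2*h)+2*h) + m ∨
         i-h+(j-2*h)+2*h = red m (i-h+(j-2*h)+2*h) + 2*m ∨
         i-h+(j-2*h)+2*h = red m (i-h+(j-2*h)+2*h) + 3*m) ∧
        ((red m (i-h+(j-2*h)+2*h) < h ∧ nr h m i j = red m (i-h+(j-2*h)+2*h)) ∨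
         (h ≤ red m (i-h+(j-2*h)+2*h) ∧
          nr h m i j = 2*h + (red m (i-h+(j-2*h)+2*h) - h)))) := by
  by_cases c1 : i < h
  · by_cases c2 : j < h
    · have hb := red_spec h (i+j) hh (by omega)
      have hn : nr h m i j = red h (i+j) := by unfold nr; rw [if_pos c1, if_pos c2]
      exact Or.inl ⟨c1, c2, hn, hb.1, by omega⟩
    · by_cases c3 : j < 2*h
      · have hb := red_spec h (i+j-h) hh (by omega)
        have hn : nr h m i j = 2*h + red h (i+j-h) := by
          unfold nr; rw [if_pos c1, if_neg c2, if_pos c3]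
        exact Or.inr (Or.inl ⟨c1, by omega, c3, hn, hb.1, by omega⟩)
      · have hb := red_spec m (i+j-2*h) (by omega) (by omega)
        have hn : nr h m i j = if red m (i+j-2*h) < h then h + red m (i+j-2*h)
            else 2*h + red m (i+j-2*h) := by
          unfold nr; rw [if_pos c1, if_neg c2, if_neg c3]
        refine Or.inr (Or.inr (Or.inl ⟨c1, by omega, hb.1, by omega, ?_⟩))
        by_cases c4 : red m (i+j-2*h) < h
        · exact Or.inl ⟨c4, by rw [hn, if_pos c4]⟩
        · exact Or.inr ⟨by omega, by rw [hn, if_neg c4]⟩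
  · by_cases c2 : j < h
    · have hb := red_spec h (i-h+j) hh (by omega)
      have hn : nr h m i j = h + m + red h (i-h+j) := by unfold nr; rw [if_neg c1, if_pos c2]
      exact Or.inr (Or.inr (Or.inr (Or.inl ⟨by omega, c2, hn, hb.1, by omega⟩)))
    · by_cases c3 : j < 2*h
      · have hb := red_spec h (i-h+(j-h)) hh (by omega)
        have hn : nr h m i j = h + red h (i-h+(j-h)) := by
          unfold nr; rw [if_neg c1, if_neg c2, if_pos c3]
        exact Or.inr (Or.inr (Or.inr (Or.inr (Or.inl
          ⟨by omega, by omega, c3, hn, hb.1, by omega⟩))))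
      · have hb := red_spec m (i-h+(j-2*h)+2*h) (by omega) (by omega)
        have hn : nr h m i j = if red m (i-h+(j-2*h)+2*h) < h then red m (i-h+(j-2*h)+2*h)
            else 2*h + (red m (i-h+(j-2*h)+2*h) - h) := by
          unfold nr; rw [if_neg c1, if_neg c2, if_neg c3]
        refine Or.inr (Or.inr (Or.inr (Or.inr (Or.inr
          ⟨by omega, by omega, hb.1, by omega, ?_⟩))))
        by_cases c4 : red m (i-h+(j-2*h)+2*h) < h
        · exact Or.inl ⟨c4, by rw [hn, if_pos c4]⟩
        · exact Or.inr ⟨by omega, by rw [hn, if_neg c4]⟩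

lemma nr_lt {h m : ℕ} (hh : 0 < h) (hm : h ≤ m) {i j : ℕ}
    (hi : i < 2*h) (hj : j < 2*h + m) : nr h m i j < 2*h + m := by
  have := nr_spec hh hm hi hj; omega

lemma nr_row_inj {h m : ℕ} (hh : 0 < h) (hm : h ≤ m) {i j j' : ℕ}
    (hi : i < 2*h) (hj : j < 2*h + m) (hj' : j' < 2*h + m)
    (e : nr h m i j = nr h m i j') : j = j' := by
  have s1 := nr_spec hh hm hi hj; have s2 := nr_spec hh hm hi hj'; omega

lemma nr_col_inj {h m : ℕ} (hh : 0 < h) (hm : h ≤ m) {i i' j : ℕ}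
    (hi : i < 2*h) (hi' : i' < 2*h) (hj : j < 2*h + m)
    (e : nr h m i j = nr h m i' j) : i = i' := by
  have s1 := nr_spec hh hm hi hj; have s2 := nr_spec hh hm hi' hj; omega

lemma nr_block0 {h m : ℕ} (hh : 0 < h) (hm : h ≤ m) {i j : ℕ}
    (hi : i < h) (hj : j < h) : nr h m i j < h := by
  have := nr_spec hh hm (by omega : i < 2*h) (by omega : j < 2*h+m); omega

lemma nr_block1 {h m : ℕ} (hh : 0 < h) (hm : h ≤ m) {i j : ℕ}
    (hi1 : h ≤ i) (hi : i < 2*h) (hj1 : h ≤ j) (hj : j < 2*h) :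
    h ≤ nr h m i j ∧ nr h m i j < 2*h := by
  have := nr_spec hh hm hi (by omega : j < 2*h+m); omega




lemma filter_lt_card {n r : ℕ} (hr : r ≤ n) :
    (Finset.univ.filter (fun i : Fin n => (i : ℕ) < r)).card = r := by
  classical
  have : Finset.univ.filter (fun i : Fin n => (i : ℕ) < r)
      = (Finset.range r).attachFin (fun x hx => by
          rw [Finset.mem_range] at hx; omega) := by
    ext i
    simp [Finset.mem_attachFin, Finset.mem_filter, Finset.mem_range]
  rw [this, Finset.card_attachFin, Finset.card_range]

lemma extend_latin {n : ℕ} (hn : 0 < n) :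
    ∀ (k r : ℕ), r + k = n →
    ∀ L : Fin n → Fin n → Fin n,
    (∀ i : Fin n, (i : ℕ) < r → ∀ j j' : Fin n, L i j = L i j' → j = j') →
    (∀ (j i i' : Fin n), (i : ℕ) < r → (i' : ℕ) < r → L i j = L i' j → i = i') →
    ∃ L' : Fin n → Fin n → Fin n,
      (∀ i j : Fin n, (i : ℕ) < r → L' i j = L i j) ∧ IsLatinSquare L' := by
  intro k
  induction k with
  | zero =>
    intro r hr L hrow hcol
    refine ⟨L, fun _ _ _ => rfl, fun i => ?_, fun j => ?_⟩
    · exact Finite.injective_iff_bijective.mp (fun j j' e => hrow i (by omega) j j' e)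
    · exact Finite.injective_iff_bijective.mp (fun i i' e => hcol j i i' (by omega) (by omega) e)
  | succ k ih =>
    intro r hr L hrow hcol
    classical
    have hrn : r < n := by omega
    haveI : Nonempty (Fin n) := ⟨⟨0, hn⟩⟩
    set Frow : Finset (Fin n) := Finset.univ.filter (fun i : Fin n => (i : ℕ) < r) with hF
    have hFmem : ∀ i : Fin n, i ∈ Frow ↔ (i : ℕ) < r := by
      intro i; simp [hF]
    have hFcard : Frow.card = r := filter_lt_card (by omega)
    set t : Fin n → Finset (Fin n) := fun j => (Frow.image (fun i => L i j))ᶜ with ht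
    have himg_card : ∀ j, (Frow.image (fun i => L i j)).card = r := by
      intro j
      rw [Finset.card_image_of_injOn, hFcard]
      intro a ha b hb e
      exact hcol j a b ((hFmem a).mp ha) ((hFmem b).mp hb) e
    have ht_card : ∀ j, (t j).card = n - r := by
      intro j
      rw [ht]
      simp only [Finset.card_compl, Fintype.card_fin, himg_card]
    -- each symbol is missing from exactly n - r columns
    have hdeg : ∀ s : Fin n, (Finset.univ.filter (fun j => s ∈ t j)).card = n - r := by
      intro s
      have hbijL : ∀ i : Fin n, (i : ℕ) < r → Function.Bijective (L i) := fun i hi =>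
        Finite.injective_iff_bijective.mp (fun j j' e => hrow i hi j j' e)
      set g : Fin n → Fin n := fun i => Function.invFun (L i) s with hg
      have hgspec : ∀ i : Fin n, (i : ℕ) < r → L i (g i) = s := fun i hi =>
        Function.invFun_eq ((hbijL i hi).2 s)
      have himageq : Finset.univ.filter (fun j => s ∈ Frow.image (fun i => L i j))
          = Frow.image g := by
        ext j
        simp only [Finset.mem_filter, Finset.mem_univ, true_and, Finset.mem_image]
        constructor
        · rintro ⟨i, hi, he⟩
          refine ⟨i, hi, ?_⟩
          have hi' := (hFmem i).mp hi
          exact hrow i hi' (g i) j (by rw [hgspec i hi', he])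
        · rintro ⟨i, hi, rfl⟩
          exact ⟨i, hi, hgspec i ((hFmem i).mp hi)⟩
      have hgi : (Frow.image g).card = r := by
        rw [Finset.card_image_of_injOn, hFcard]
        intro a ha b hb e
        have ha' := (hFmem a).mp ha
        have hb' := (hFmem b).mp hb
        apply hcol (g a) a b ha' hb'
        rw [hgspec a ha', e, hgspec b hb']
      have hsplit := Finset.card_filter_add_card_filter_not
        (s := (Finset.univ : Finset (Fin n))) (p := fun j => s ∈ Frow.image (fun i => L i j))
      have hcompl : (Finset.univ.filter (fun j => s ∈ t j))
          = Finset.univ.filter (fun j => ¬ s ∈ Frow.image (fun i => L i j)) := by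
        ext j; simp [ht]
      rw [hcompl]
      rw [himageq, hgi] at hsplit
      simp only [Finset.card_univ, Fintype.card_fin] at hsplit
      omega
    -- Hall's condition
    have hall : ∀ T : Finset (Fin n), T.card ≤ (T.biUnion t).card := by
      intro T
      set U := T.biUnion t with hU
      have hsub : ∀ j ∈ T, t j ⊆ U := fun j hj => Finset.subset_biUnion_of_mem t hj
      have e1 : ∀ j ∈ T, t j = U.filter (fun s => s ∈ t j) := by
        intro j hj
        ext s
        simp only [Finset.mem_filter]
        exact ⟨fun hs => ⟨hsub j hj hs, hs⟩, fun hs => hs.2⟩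
      have key : T.card * (n - r) ≤ U.card * (n - r) := by
        calc T.card * (n - r) = ∑ _j ∈ T, (n - r) := by
              rw [Finset.sum_const, smul_eq_mul]
          _ = ∑ j ∈ T, (t j).card := by
              refine Finset.sum_congr rfl (fun j _ => ?_); rw [ht_card j]
          _ = ∑ j ∈ T, (U.filter (fun s => s ∈ t j)).card := by
              refine Finset.sum_congr rfl (fun j hj => ?_); rw [← e1 j hj]
          _ = ∑ j ∈ T, ∑ s ∈ U, (if s ∈ t j then 1 else 0) := by
              refine Finset.sum_congr rfl (fun j _ => ?_); rw [Finset.card_filter]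
          _ = ∑ s ∈ U, ∑ j ∈ T, (if s ∈ t j then 1 else 0) := Finset.sum_comm
          _ = ∑ s ∈ U, (T.filter (fun j => s ∈ t j)).card := by
              refine Finset.sum_congr rfl (fun s _ => ?_); rw [Finset.card_filter]
          _ ≤ ∑ s ∈ U, (n - r) := by
              refine Finset.sum_le_sum (fun s _ => ?_)
              rw [← hdeg s]
              exact Finset.card_le_card (Finset.filter_subset_filter _ (Finset.subset_univ T))
          _ = U.card * (n - r) := by rw [Finset.sum_const, smul_eq_mul]
      exact Nat.le_of_mul_le_mul_right key (by omega)
    obtain ⟨f, hfinj, hfmem⟩ := (Finset.all_card_le_biUnion_card_iff_exists_injective t).mp hall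
    set L2 : Fin n → Fin n → Fin n := fun i j => if (i : ℕ) = r then f j else L i j with hL2
    have hrow2 : ∀ i : Fin n, (i : ℕ) < r + 1 → ∀ j j' : Fin n, L2 i j = L2 i j' → j = j' := by
      intro i hi j j' e
      simp only [hL2] at e
      by_cases hir : (i : ℕ) = r
      · rw [if_pos hir, if_pos hir] at e; exact hfinj e
      · rw [if_neg hir, if_neg hir] at e; exact hrow i (by omega) j j' e
    have hcol2 : ∀ (j i i' : Fin n), (i : ℕ) < r + 1 → (i' : ℕ) < r + 1 →
        L2 i j = L2 i' j → i = i' := by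
      intro j i i' hi hi' e
      simp only [hL2] at e
      by_cases h1 : (i : ℕ) = r <;> by_cases h2 : (i' : ℕ) = r
      · exact Fin.ext (by omega)
      · exfalso
        rw [if_pos h1, if_neg h2] at e
        have hfj := hfmem j
        rw [ht, Finset.mem_compl] at hfj
        exact hfj (by rw [e]; exact Finset.mem_image_of_mem _ ((hFmem i').mpr (by omega)))
      · exfalso
        rw [if_neg h1, if_pos h2] at e
        have hfj := hfmem j
        rw [ht, Finset.mem_compl] at hfj
        exact hfj (by rw [← e]; exact Finset.mem_image_of_mem _ ((hFmem i).mpr (by omega)))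
      · rw [if_neg h1, if_neg h2] at e
        exact hcol j i i' (by omega) (by omega) e
    obtain ⟨L', hagree, hlat⟩ := ih (r + 1) (by omega) L2 hrow2 hcol2
    refine ⟨L', fun i j hi => ?_, hlat⟩
    rw [hagree i j (by omega)]
    simp only [hL2]
    rw [if_neg (by omega)]

end ILSAux

open ILSAux in
/-- For positive integers `h₁` and `n`, an `ILS(n; h₁²)` exists iff `n ≥ 3h₁`. -/
theorem ils_two_equal_subsquares (n h₁ : ℕ) (h1pos : 0 < h₁) (npos : 0 < n) :
    ILS n 2 (fun _ => h₁) ↔ 3 * h₁ ≤ n := by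
  constructor
  · -- necessity
    rintro ⟨L, ⟨hrow, hcol⟩, R, C, S, hcard, hmem, hdisj⟩
    classical
    obtain ⟨hR01, hC01, hS01⟩ := hdisj 0 1 (by decide)
    have hr0 : (R 0).card = h₁ := (hcard 0).1
    have hr1 : (R 1).card = h₁ := (hcard 1).1
    have hc0 : (C 0).card = h₁ := (hcard 0).2.1
    have hc1 : (C 1).card = h₁ := (hcard 1).2.1
    have hs0 : (S 0).card = h₁ := (hcard 0).2.2
    have hs1 : (S 1).card = h₁ := (hcard 1).2.2
    have himg0 : ∀ j ∈ C 0, (R 0).image (fun i' => L i' j) = S 0 := by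
      intro j hj
      apply Finset.eq_of_subset_of_card_le
      · intro s hs
        rw [Finset.mem_image] at hs
        obtain ⟨i', hi', rfl⟩ := hs
        exact hmem 0 i' hi' j hj
      · rw [Finset.card_image_of_injOn (fun a _ b _ e => (hcol j).1 e), hr0, hs0]
    have himg1 : ∀ i ∈ R 1, (C 1).image (fun j' => L i j') = S 1 := by
      intro i hi
      apply Finset.eq_of_subset_of_card_le
      · intro s hs
        rw [Finset.mem_image] at hs
        obtain ⟨j', hj', rfl⟩ := hs
        exact hmem 1 i hi j' hj'
      · rw [Finset.card_image_of_injOn (fun a _ b _ e => (hrow i).1 e), hc1, hs1]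
    have key : ∀ i ∈ R 1, ∀ j ∈ C 0, L i j ∉ S 0 ∪ S 1 := by
      intro i hi j hj hmem'
      rw [Finset.mem_union] at hmem'
      rcases hmem' with hs | hs
      · rw [← himg0 j hj, Finset.mem_image] at hs
        obtain ⟨i', hi', he⟩ := hs
        have : i' = i := (hcol j).1 he
        subst this
        exact (Finset.disjoint_left.mp hR01 hi') hi
      · rw [← himg1 i hi, Finset.mem_image] at hs
        obtain ⟨j', hj', he⟩ := hs
        have : j' = j := (hrow i).1 he
        subst this
        exact (Finset.disjoint_left.mp hC01 hj) hj'
    have hcount : ((R 1) ×ˢ (C 0)).card ≤ ((R 1) ×ˢ (S 0 ∪ S 1)ᶜ).card := by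
      apply Finset.card_le_card_of_injOn (fun p => (p.1, L p.1 p.2))
      · intro p hp
        rw [Finset.mem_coe, Finset.mem_product] at hp
        rw [Finset.mem_coe, Finset.mem_product]
        exact ⟨hp.1, Finset.mem_compl.mpr (key p.1 hp.1 p.2 hp.2)⟩
      · intro p hp q hq e
        rw [Prod.mk.injEq] at e
        obtain ⟨e1, e2⟩ := e
        rw [e1] at e2
        exact Prod.ext e1 ((hrow q.1).1 e2)
    have hunion : (S 0 ∪ S 1).card = 2 * h₁ := by
      rw [Finset.card_union_of_disjoint hS01, hs0, hs1]; ring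
    have h2n : 2 * h₁ ≤ n := by
      have := Finset.card_le_univ (S 0 ∪ S 1)
      rwa [hunion, Fintype.card_fin] at this
    rw [Finset.card_product, Finset.card_product, hr1, hc0,
      Finset.card_compl, Fintype.card_fin, hunion] at hcount
    have := Nat.le_of_mul_le_mul_left hcount h1pos
    omega
  · -- sufficiency
    intro hn
    classical
    set m := n - 2 * h₁ with hmdef
    have hm : h₁ ≤ m := by omega
    have hn2 : n = 2 * h₁ + m := by omega
    set L0 : Fin n → Fin n → Fin n :=
      fun i j => ⟨nr h₁ m i j % n, Nat.mod_lt _ npos⟩ with hL0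
    have hval : ∀ i j : Fin n, (i : ℕ) < 2 * h₁ → (L0 i j : ℕ) = nr h₁ m (i : ℕ) (j : ℕ) := by
      intro i j hi
      simp only [hL0]
      refine Nat.mod_eq_of_lt ?_
      have hb := nr_lt h1pos hm hi (show (j : ℕ) < 2 * h₁ + m by have := j.isLt; omega)
      omega
    have hjlt : ∀ j : Fin n, (j : ℕ) < 2 * h₁ + m := fun j => by have := j.isLt; omega
    obtain ⟨L', hagree, hlat⟩ := extend_latin npos m (2 * h₁) (by omega) L0
      (fun i hi j j' e => by
        apply Fin.ext
        apply nr_row_inj h1pos hm hi (hjlt j) (hjlt j')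
        rw [← hval i j hi, ← hval i j' hi, e])
      (fun j i i' hi hi' e => by
        apply Fin.ext
        apply nr_col_inj h1pos hm hi hi' (hjlt j)
        rw [← hval i j hi, ← hval i' j hi', e])
    have hh1n : h₁ ≤ n := by omega
    have hh2n : 2 * h₁ ≤ n := by omega
    set R0 : Finset (Fin n) := (Finset.range h₁).attachFin
      (fun x hx => by rw [Finset.mem_range] at hx; omega) with hR0
    set R1 : Finset (Fin n) := (Finset.Ico h₁ (2 * h₁)).attachFin
      (fun x hx => by rw [Finset.mem_Ico] at hx; omega) with hR1
    have hR0mem : ∀ i : Fin n, i ∈ R0 ↔ (i : ℕ) < h₁ := by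
      intro i; rw [hR0, Finset.mem_attachFin, Finset.mem_range]
    have hR1mem : ∀ i : Fin n, i ∈ R1 ↔ h₁ ≤ (i : ℕ) ∧ (i : ℕ) < 2 * h₁ := by
      intro i; rw [hR1, Finset.mem_attachFin, Finset.mem_Ico]
    have hR0card : R0.card = h₁ := by
      rw [hR0, Finset.card_attachFin, Finset.card_range]
    have hR1card : R1.card = h₁ := by
      rw [hR1, Finset.card_attachFin, Nat.card_Ico]; omega
    have hd : Disjoint R0 R1 := by
      rw [Finset.disjoint_left]
      intro i h0 h1
      have := (hR0mem i).mp h0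
      have := (hR1mem i).mp h1
      omega
    set RR : Fin 2 → Finset (Fin n) := fun a => if a = 0 then R0 else R1 with hRR
    have hRR0 : RR 0 = R0 := by simp [hRR]
    have hRR1 : RR 1 = R1 := by simp [hRR]
    have htwo : ∀ a : Fin 2, a = 0 ∨ a = 1 := by decide
    refine ⟨L', hlat, RR, RR, RR, ?_, ?_, ?_⟩
    · intro a
      rcases htwo a with rfl | rfl
      · rw [hRR0]; exact ⟨hR0card, hR0card, hR0card⟩
      · rw [hRR1]; exact ⟨hR1card, hR1card, hR1card⟩
    · intro a i hi j hj
      rcases htwo a with rfl | rfl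
      · rw [hRR0] at hi hj ⊢
        have hi' := (hR0mem i).mp hi
        have hj' := (hR0mem j).mp hj
        rw [hR0mem]
        rw [hagree i j (by omega), hval i j (by omega)]
        exact nr_block0 h1pos hm hi' hj'
      · rw [hRR1] at hi hj ⊢
        have hi' := (hR1mem i).mp hi
        have hj' := (hR1mem j).mp hj
        rw [hR1mem]
        rw [hagree i j (by omega), hval i j (by omega)]
        exact nr_block1 h1pos hm hi'.1 hi'.2 hj'.1 hj'.2
    · intro a b hab
      rcases htwo a with rfl | rfl <;> rcases htwo b with rfl | rfl
      · exact absurd rfl hab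
      · rw [hRR0, hRR1]; exact ⟨hd, hd, hd⟩
      · rw [hRR0, hRR1]; exact ⟨hd.symm, hd.symm, hd.symm⟩
      · exact absurd rfl hab
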